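/- arXiv:1412.4452 — 2 statements merged into one kernel-verified Lean document; each statement's English description precedes it below -/
import Mathlib

section
/- Let M ∈ ℝ^{m×n}, q ∈ ℝᵐ and δ ≥ 0, and suppose the set {z ∈ ℝⁿ : ‖Mz − q‖ ≤ δ} is nonempty. If r = min { ‖z‖₀ : ‖Mz − q‖ ≤ δ } > 0, then there exists α > 0 such that for every z with ‖Mz − q‖ ≤ δ, the r-th largest component of |z| satisfies |z|ᵣ↓ > α. -/
/-- The Euclidean norm of a vector in `ℝᵐ`. -/
noncomputable def enorm {m : ℕ} (u : Fin m → ℝ) : ℝ := Real.sqrt (∑ i, u i ^ 2)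

/-- The zero-norm (number of nonzero components) of `z ∈ ℝⁿ`. -/
noncomputable def zeroNorm {n : ℕ} (z : Fin n → ℝ) : ℕ :=
  (Finset.univ.filter fun i => z i ≠ 0).card

lemma enorm_eq' {m : ℕ} (u : Fin m → ℝ) :
    _root_.enorm u = ‖(WithLp.equiv 2 (Fin m → ℝ)).symm u‖ := by
  rw [EuclideanSpace.norm_eq]
  simp [_root_.enorm, sq_abs]

noncomputable def MlinE' {m n : ℕ} (M : Matrix (Fin m) (Fin n) ℝ) :
    (Fin n → ℝ) →ₗ[ℝ] EuclideanSpace ℝ (Fin m) :=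
  (WithLp.linearEquiv 2 ℝ (Fin m → ℝ)).symm.toLinearMap.comp M.mulVecLin

lemma enorm_sub_eq' {m n : ℕ} (M : Matrix (Fin m) (Fin n) ℝ) (q : Fin m → ℝ) (z : Fin n → ℝ) :
    _root_.enorm (M.mulVec z - q) = ‖(WithLp.equiv 2 (Fin m → ℝ)).symm q - MlinE' M z‖ := by
  rw [enorm_eq', ← norm_sub_rev]
  rfl

def Vsub' {n : ℕ} (T : Finset (Fin n)) : Submodule ℝ (Fin n → ℝ) where
  carrier := {z | ∀ i ∉ T, z i = 0}
  add_mem' := fun ha hb i hi => by simp [ha i hi, hb i hi]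
  zero_mem' := fun i _ => rfl
  smul_mem' := fun c z hz i hi => by simp [hz i hi]

lemma mulVec_bound' {m n : ℕ} (M : Matrix (Fin m) (Fin n) ℝ) (v : Fin n → ℝ) (α : ℝ)
    (hα : 0 ≤ α) (hv : ∀ i, |v i| ≤ α) :
    _root_.enorm (M.mulVec v) ≤ α * Real.sqrt (∑ j, (∑ i, |M j i|)^2) := by
  have h1 : ∀ j, (M.mulVec v j)^2 ≤ (α * ∑ i, |M j i|)^2 := by
    intro j
    have habs : |M.mulVec v j| ≤ α * ∑ i, |M j i| := by
      calc |M.mulVec v j| = |∑ i, M j i * v i| := by rw [Matrix.mulVec, dotProduct]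
        _ ≤ ∑ i, |M j i * v i| := Finset.abs_sum_le_sum_abs _ _
        _ ≤ ∑ i, |M j i| * α := by
            refine Finset.sum_le_sum fun i _ => ?_
            rw [abs_mul]
            exact mul_le_mul_of_nonneg_left (hv i) (abs_nonneg _)
        _ = α * ∑ i, |M j i| := by rw [Finset.mul_sum]; simp [mul_comm]
    calc (M.mulVec v j)^2 = |M.mulVec v j|^2 := (sq_abs _).symm
      _ ≤ (α * ∑ i, |M j i|)^2 := pow_le_pow_left₀ (abs_nonneg _) habs 2
  calc _root_.enorm (M.mulVec v) ≤ Real.sqrt (∑ j, (α * ∑ i, |M j i|)^2) :=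
        Real.sqrt_le_sqrt (Finset.sum_le_sum fun j _ => h1 j)
    _ = α * Real.sqrt (∑ j, (∑ i, |M j i|)^2) := by
        rw [show ∑ j, (α * ∑ i, |M j i|)^2 = α^2 * ∑ j, (∑ i, |M j i|)^2 by
          rw [Finset.mul_sum]; congr 1; ext j; ring]
        rw [Real.sqrt_mul (sq_nonneg α), Real.sqrt_sq hα]

/-- if `r = min { ‖z‖₀ : ‖Mz − q‖ ≤ δ } > 0`, then there is `α > 0` such that
for every feasible `z`, the `r`-th largest component of `|z|` exceeds `α`; equivalently,
at least `r` components of `|z|` are greater than `α`. -/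
theorem rth_largest_bounded_below {m n : ℕ} (M : Matrix (Fin m) (Fin n) ℝ)
    (q : Fin m → ℝ) (δ : ℝ) (hδ : 0 ≤ δ)
    (hne : ∃ z : Fin n → ℝ, _root_.enorm (M.mulVec z - q) ≤ δ)
    (r : ℕ) (hrpos : 0 < r)
    (hr : IsLeast {k : ℕ | ∃ z : Fin n → ℝ, _root_.enorm (M.mulVec z - q) ≤ δ ∧ zeroNorm z = k} r) :
    ∃ α > (0 : ℝ), ∀ z : Fin n → ℝ, _root_.enorm (M.mulVec z - q) ≤ δ →
      r ≤ (Finset.univ.filter fun i => α < |z i|).card := by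
  classical
  set qE := (WithLp.equiv 2 (Fin m → ℝ)).symm q with hqE
  -- minimizers on each support set
  have key : ∀ T : Finset (Fin n), ∃ zT ∈ Vsub' T, ∀ z ∈ Vsub' T,
      ‖qE - MlinE' M zT‖ ≤ ‖qE - MlinE' M z‖ := by
    intro T
    set K := (Vsub' T).map (MlinE' M)
    have hP := Submodule.starProjection_minimal (U := K) qE
    obtain ⟨zT, hzT, hzTeq⟩ := (K.orthogonalProjectionOnto qE).2
    refine ⟨zT, hzT, fun z hz => ?_⟩
    rw [hzTeq, ← Submodule.starProjection_apply, hP]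
    exact ciInf_le ⟨0, fun x hx => by obtain ⟨y, rfl⟩ := hx; positivity⟩
      (⟨MlinE' M z, ⟨z, hz, rfl⟩⟩ : K)
  choose f hf hmin using key
  -- each minimizer over small support is infeasible
  have hgt : ∀ T : Finset (Fin n), T.card < r → δ < _root_.enorm (M.mulVec (f T) - q) := by
    intro T hT
    by_contra h
    push_neg at h
    have hfeas : r ≤ zeroNorm (f T) := hr.2 ⟨f T, h, rfl⟩
    rw [zeroNorm] at hfeas
    have hsub : (Finset.univ.filter fun i => f T i ≠ 0) ⊆ T := by
      intro i hi
      simp only [Finset.mem_filter] at hi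
      by_contra hiT
      exact hi.2 (hf T i hiT)
    have := Finset.card_le_card hsub
    omega
  -- the finite family of small supports
  set 𝒯 : Finset (Finset (Fin n)) := Finset.univ.filter (fun T => T.card < r) with h𝒯
  have hEm : (∅ : Finset (Fin n)) ∈ 𝒯 := by simp [h𝒯, hrpos]
  have h𝒯ne : 𝒯.Nonempty := ⟨∅, hEm⟩
  set D : ℝ := 𝒯.inf' h𝒯ne (fun T => _root_.enorm (M.mulVec (f T) - q)) with hD
  have hδD : δ < D := by
    rw [hD, Finset.lt_inf'_iff]
    intro T hT
    exact hgt T (by simpa [h𝒯] using hT)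
  set C : ℝ := Real.sqrt (∑ j, (∑ i, |M j i|)^2) with hC
  have hC0 : 0 ≤ C := Real.sqrt_nonneg _
  set α : ℝ := (D - δ) / (2 * (C + 1)) with hα
  have hα0 : 0 < α := by
    apply div_pos (by linarith) (by linarith)
  refine ⟨α, hα0, fun z hz => ?_⟩
  by_contra hcon
  push_neg at hcon
  set T : Finset (Fin n) := Finset.univ.filter (fun i => α < |z i|) with hT
  set z' : Fin n → ℝ := fun i => if α < |z i| then z i else 0 with hz'
  have hz'mem : z' ∈ Vsub' T := by
    intro i hi
    simp only [hT, Finset.mem_filter, Finset.mem_univ, true_and] at hi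
    simp [hz', hi]
  have hvbound : ∀ i, |z i - z' i| ≤ α := by
    intro i
    by_cases h : α < |z i|
    · simp [hz', h]; exact le_of_lt hα0
    · simp only [hz', if_neg h, sub_zero]
      exact le_of_not_gt h
  -- chain of inequalities
  have hDle : D ≤ _root_.enorm (M.mulVec (f T) - q) :=
    Finset.inf'_le _ (by simp [h𝒯, hT, hcon]; exact hcon)
  have h1 : _root_.enorm (M.mulVec (f T) - q) ≤ _root_.enorm (M.mulVec z' - q) := by
    rw [enorm_sub_eq', enorm_sub_eq']
    exact hmin T z' hz'mem
  have h2 : _root_.enorm (M.mulVec z' - q) ≤ _root_.enorm (M.mulVec z - q) + _root_.enorm (M.mulVec (z - z')) := by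
    rw [enorm_sub_eq' M q z', enorm_sub_eq' M q z, enorm_eq' (M.mulVec (z - z'))]
    have : qE - MlinE' M z' = (qE - MlinE' M z) +
        ((WithLp.equiv 2 (Fin m → ℝ)).symm (M.mulVec (z - z'))) := by
      have : (WithLp.equiv 2 (Fin m → ℝ)).symm (M.mulVec (z - z')) =
          MlinE' M z - MlinE' M z' := by
        rw [← map_sub]; rfl
      rw [this]; abel
    rw [this]
    exact norm_add_le _ _
  have h3 : _root_.enorm (M.mulVec (z - z')) ≤ α * C := by
    refine mulVec_bound' M _ α (le_of_lt hα0) ?_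
    intro i
    simpa using hvbound i
  have hαC : α * C < D - δ := by
    have : α * C ≤ α * (C + 1) := by nlinarith
    have heq : α * (C + 1) = (D - δ) / 2 := by
      rw [hα]; field_simp
    nlinarith
  have := hz
  linarith [hDle, h1, h2, h3]
end

section
/- Assume the feasible set {x ∈ ℝⁿ : ‖Ax − b‖ ≤ δ} is nonempty. Then there exists a constant ρ̄ > 0 such that for all ρ > ρ̄, the set of globally optimal solutions of the MPEC problem min { ⟨e, e − v⟩ : ‖Ax − b‖ ≤ δ, ⟨v, |x|⟩ = 0, 0 ≤ v ≤ e } coincides with the set of globally optimal solutions of the penalty problem min { ⟨e, e − v⟩ + ρ⟨v, |x|⟩ : ‖Ax − b‖ ≤ δ, 0 ≤ v ≤ e }. -/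
/-- Feasibility for the MPEC problem. -/
noncomputable def MPECFeasible {m n : ℕ} (A : Matrix (Fin m) (Fin n) ℝ) (b : Fin m → ℝ)
    (δ : ℝ) (p : (Fin n → ℝ) × (Fin n → ℝ)) : Prop :=
  _root_.enorm (A.mulVec p.1 - b) ≤ δ ∧ (∑ i, p.2 i * |p.1 i|) = 0 ∧ ∀ i, 0 ≤ p.2 i ∧ p.2 i ≤ 1

/-- Feasibility for the penalty problem. -/
noncomputable def PenFeasible {m n : ℕ} (A : Matrix (Fin m) (Fin n) ℝ) (b : Fin m → ℝ)
    (δ : ℝ) (p : (Fin n → ℝ) × (Fin n → ℝ)) : Prop :=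
  _root_.enorm (A.mulVec p.1 - b) ≤ δ ∧ ∀ i, 0 ≤ p.2 i ∧ p.2 i ≤ 1

/-- Objective of the MPEC problem. -/
noncomputable def mpecObj {n : ℕ} (p : (Fin n → ℝ) × (Fin n → ℝ)) : ℝ := ∑ i, (1 - p.2 i)

/-- Objective of the penalty problem with parameter `ρ`. -/
noncomputable def penObj {n : ℕ} (ρ : ℝ) (p : (Fin n → ℝ) × (Fin n → ℝ)) : ℝ :=
  (∑ i, (1 - p.2 i)) + ρ * ∑ i, p.2 i * |p.1 i|

open Finset in
private lemma sum_eq_of_le' {α : Type*} {s : Finset α} {f g : α → ℝ}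
    (h : ∀ i ∈ s, f i ≤ g i) (hs : ∑ i ∈ s, g i ≤ ∑ i ∈ s, f i) : ∀ i ∈ s, f i = g i := by
  intro i hi
  by_contra hne
  have : ∑ j ∈ s, f j < ∑ j ∈ s, g j :=
    Finset.sum_lt_sum h ⟨i, hi, lt_of_le_of_ne (h i hi) hne⟩
  linarith

private lemma proj_min {E : Type*} [NormedAddCommGroup E] [InnerProductSpace ℝ E]
    (U : Submodule ℝ E) [U.HasOrthogonalProjection] (y w : E) (hw : w ∈ U) :
    ‖y - (U.orthogonalProjectionOnto y : E)‖ ≤ ‖y - w‖ := by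
  rw [Submodule.coe_orthogonalProjectionOnto_apply, Submodule.starProjection_minimal]
  exact ciInf_le ⟨0, fun z hz => by rcases hz with ⟨v, rfl⟩; positivity⟩ (⟨w, hw⟩ : U)

/-- The submodule of vectors supported in `T`. -/
private def suppSub {n : ℕ} (T : Finset (Fin n)) : Submodule ℝ (Fin n → ℝ) where
  carrier := {y | ∀ i ∉ T, y i = 0}
  add_mem' := fun ha hb i hi => by simp [ha i hi, hb i hi]
  zero_mem' := fun i _ => rfl
  smul_mem' := fun c y hy i hi => by simp [hy i hi]

private lemma mem_suppSub {n : ℕ} {T : Finset (Fin n)} {y : Fin n → ℝ} :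
    y ∈ suppSub T ↔ ∀ i ∉ T, y i = 0 := Iff.rfl

set_option maxHeartbeats 1000000 in
theorem exact_penalty {m n : ℕ} (A : Matrix (Fin m) (Fin n) ℝ) (b : Fin m → ℝ)
    (δ : ℝ) (hδ : 0 ≤ δ) (hne : ∃ x : Fin n → ℝ, _root_.enorm (A.mulVec x - b) ≤ δ) :
    ∃ ρbar > (0 : ℝ), ∀ ρ > ρbar,
      {p : (Fin n → ℝ) × (Fin n → ℝ) | MPECFeasible A b δ p ∧
        ∀ q : (Fin n → ℝ) × (Fin n → ℝ), MPECFeasible A b δ q → mpecObj p ≤ mpecObj q} =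
      {p : (Fin n → ℝ) × (Fin n → ℝ) | PenFeasible A b δ p ∧
        ∀ q : (Fin n → ℝ) × (Fin n → ℝ), PenFeasible A b δ q → penObj ρ p ≤ penObj ρ q} := by
  classical
  -- abbreviations
  set Feas : (Fin n → ℝ) → Prop := fun x => _root_.enorm (A.mulVec x - b) ≤ δ with hFeasDef
  set sc : (Fin n → ℝ) → ℕ := fun x => (Finset.univ.filter fun i => x i ≠ 0).card with hscDef
  -- the minimal support size k
  have hPn : ∃ j : ℕ, ∃ x, Feas x ∧ sc x ≤ j := by
    obtain ⟨x, hx⟩ := hne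
    exact ⟨n, x, hx, by simpa using (Finset.card_filter_le Finset.univ (fun i => x i ≠ 0))⟩
  have hkex : ∃ k : ℕ, (∃ x, Feas x ∧ sc x ≤ k) ∧ ∀ x, Feas x → k ≤ sc x := by
    refine ⟨Nat.find hPn, Nat.find_spec hPn, fun x hx => ?_⟩
    by_contra h
    push_neg at h
    exact Nat.find_min hPn h ⟨x, hx, le_refl _⟩
  obtain ⟨k, ⟨xs, hxsF, hxsc⟩, hk_le⟩ := hkex
  -- the Euclidean space setup
  set toE : (Fin m → ℝ) → EuclideanSpace ℝ (Fin m) :=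
    fun u => (WithLp.linearEquiv 2 ℝ (Fin m → ℝ)).symm u with htoEDef
  have htoE_apply : ∀ (u : Fin m → ℝ) (j : Fin m), toE u j = u j := by
    intro u j; simp [htoEDef, WithLp.linearEquiv_symm_apply]
  have henorm : ∀ u : Fin m → ℝ, _root_.enorm u = ‖toE u‖ := by
    intro u
    rw [EuclideanSpace.norm_eq, _root_.enorm]
    congr 1
    refine Finset.sum_congr rfl fun i _ => ?_
    rw [htoE_apply, Real.norm_eq_abs, sq_abs]
  set Lm : (Fin n → ℝ) →ₗ[ℝ] EuclideanSpace ℝ (Fin m) :=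
    ((WithLp.linearEquiv 2 ℝ (Fin m → ℝ)).symm.toLinearMap).comp A.mulVecLin with hLmDef
  have hLm : ∀ x : Fin n → ℝ, Lm x = toE (A.mulVec x) := by
    intro x; simp [hLmDef, htoEDef]
  set bE : EuclideanSpace ℝ (Fin m) := toE b with hbEDef
  have hFeas' : ∀ x, Feas x ↔ ‖Lm x - bE‖ ≤ δ := by
    intro x
    have h1 : toE (A.mulVec x - b) = Lm x - bE := by
      rw [hLm, hbEDef]
      exact map_sub ((WithLp.linearEquiv 2 ℝ (Fin m → ℝ)).symm) _ _
    show _root_.enorm (A.mulVec x - b) ≤ δ ↔ _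
    rw [henorm, h1]
  -- columns and the constant C
  set col : Fin n → EuclideanSpace ℝ (Fin m) := fun i => toE (fun j => A j i) with hcolDef
  set C : ℝ := ∑ i, ‖col i‖ with hCDef
  have hC0 : 0 ≤ C := Finset.sum_nonneg fun i _ => norm_nonneg _
  have hLmsum : ∀ z : Fin n → ℝ, Lm z = ∑ i, z i • col i := by
    intro z
    rw [hLm]
    have : A.mulVec z = ∑ i, z i • (fun j => A j i) := by
      funext j
      simp [Matrix.mulVec, dotProduct, Finset.sum_apply, mul_comm]
    rw [this, htoEDef]
    simp [hcolDef, htoEDef]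
  have hLmnorm : ∀ z : Fin n → ℝ, ‖Lm z‖ ≤ C * ∑ i, |z i| := by
    intro z
    rw [hLmsum]
    calc ‖∑ i, z i • col i‖ ≤ ∑ i, ‖z i • col i‖ := norm_sum_le _ _
      _ = ∑ i, |z i| * ‖col i‖ := by
          refine Finset.sum_congr rfl fun i _ => ?_
          rw [norm_smul, Real.norm_eq_abs]
      _ ≤ ∑ i, |z i| * C := by
          refine Finset.sum_le_sum fun i _ => ?_
          refine mul_le_mul_of_nonneg_left ?_ (abs_nonneg _)
          rw [hCDef]
          exact Finset.single_le_sum (fun j _ => norm_nonneg (col j)) (Finset.mem_univ i)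
      _ = C * ∑ i, |z i| := by rw [← Finset.sum_mul, mul_comm]
  -- subspaces and distances
  set WT : Finset (Fin n) → Submodule ℝ (EuclideanSpace ℝ (Fin m)) :=
    fun T => (suppSub T).map Lm with hWTDef
  set dT : Finset (Fin n) → ℝ :=
    fun T => ‖bE - ((WT T).orthogonalProjectionOnto bE : EuclideanSpace ℝ (Fin m))‖ with hdTDef
  have hdT : ∀ T : Finset (Fin n), T.card < k → δ < dT T := by
    intro T hT
    by_contra h
    push_neg at h
    obtain ⟨y, hyV, hyL⟩ := ((WT T).orthogonalProjectionOnto bE).2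
    have hyF : Feas y := by
      rw [hFeas']
      rw [hyL, norm_sub_rev]
      exact h
    have h1 : k ≤ sc y := hk_le y hyF
    have h2 : sc y ≤ T.card := by
      refine Finset.card_le_card ?_
      intro i hi
      rw [Finset.mem_filter] at hi
      by_contra hiT
      exact hi.2 (hyV i hiT)
    omega
  -- The crucial lower bound at some fixed ρ0 ≥ 1
  have hbase : ∃ ρ0 : ℝ, 1 ≤ ρ0 ∧ ∀ x, Feas x → (k : ℝ) ≤ ∑ i, min 1 (ρ0 * |x i|) := by
    rcases Nat.eq_zero_or_pos k with hk0 | hkpos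
    · refine ⟨1, le_refl _, fun x _ => ?_⟩
      rw [hk0]
      push_cast
      exact Finset.sum_nonneg fun i _ =>
        le_min zero_le_one (mul_nonneg zero_le_one (abs_nonneg _))
    · set Tset : Finset (Finset (Fin n)) := Finset.univ.filter (fun T => T.card < k) with hTsetDef
      have hTne : Tset.Nonempty := ⟨∅, by simp [hTsetDef, hkpos]⟩
      set c : ℝ := (Tset.image fun T => dT T - δ).min' (hTne.image _) with hcDef
      have hc_pos : 0 < c := by
        have := Finset.min'_mem (Tset.image fun T => dT T - δ) (hTne.image _)
        rw [Finset.mem_image] at this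
        obtain ⟨T, hTmem, hTeq⟩ := this
        rw [hcDef, ← hTeq]
        have := hdT T (by rw [hTsetDef] at hTmem; exact (Finset.mem_filter.1 hTmem).2)
        linarith
      have hc_le : ∀ T : Finset (Fin n), T.card < k → c ≤ dT T - δ := by
        intro T hT
        refine Finset.min'_le _ _ ?_
        exact Finset.mem_image_of_mem (fun T => dT T - δ) (by simp [hTsetDef, hT])
      refine ⟨max 1 ((k : ℝ) * C / c), le_max_left _ _, fun x hx => ?_⟩
      set ρ0 : ℝ := max 1 ((k : ℝ) * C / c) with hρ0Def
      have hρ0_1 : (1:ℝ) ≤ ρ0 := le_max_left _ _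
      set S : Finset (Fin n) := Finset.univ.filter (fun i => 1 ≤ ρ0 * |x i|) with hSDef
      by_cases hS : k ≤ S.card
      · calc (k : ℝ) ≤ S.card := by exact_mod_cast hS
          _ = ∑ i ∈ S, min 1 (ρ0 * |x i|) := by
              rw [Finset.sum_congr rfl (fun i hi => ?_)]
              · rw [Finset.sum_const, nsmul_eq_mul, mul_one]
              · rw [hSDef] at hi
                exact min_eq_left (Finset.mem_filter.1 hi).2
          _ ≤ ∑ i, min 1 (ρ0 * |x i|) := by
              refine Finset.sum_le_sum_of_subset_of_nonneg (Finset.subset_univ _)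
                (fun i _ _ => ?_)
              exact le_min zero_le_one (mul_nonneg (by linarith) (abs_nonneg _))
      · push_neg at hS
        set y : Fin n → ℝ := fun i => if i ∈ S then x i else 0 with hyDef
        have hyV : y ∈ suppSub S := fun i hi => by simp [hyDef, hi]
        set s : ℝ := ∑ i ∈ Finset.univ \ S, |x i| with hsDef
        have hs0 : 0 ≤ s := Finset.sum_nonneg fun i _ => abs_nonneg _
        have hxy : ∑ i, |x i - y i| = s := by
          rw [hsDef]
          rw [Finset.sum_congr rfl (g := fun i => if i ∈ Finset.univ \ S then |x i| else 0)
            (fun i _ => ?_)]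
          · rw [Finset.sum_ite_mem, Finset.univ_inter]
          · by_cases hi : i ∈ S <;> simp [hyDef, hi]
        have hCs : c ≤ C * s := by
          have h1 : c ≤ dT S - δ := hc_le S hS
          have h2 : dT S ≤ ‖bE - Lm y‖ :=
            proj_min (WT S) bE (Lm y) ⟨y, hyV, rfl⟩
          have h3 : ‖bE - Lm y‖ ≤ ‖bE - Lm x‖ + ‖Lm x - Lm y‖ :=
            norm_sub_le_norm_sub_add_norm_sub _ _ _
          have h4 : ‖bE - Lm x‖ ≤ δ := by
            rw [norm_sub_rev]
            exact (hFeas' x).1 hx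
          have h5 : ‖Lm x - Lm y‖ ≤ C * s := by
            rw [← map_sub]
            calc ‖Lm (x - y)‖ ≤ C * ∑ i, |(x - y) i| := hLmnorm _
              _ = C * s := by rw [← hxy]; rfl
          linarith
        have hks : (k : ℝ) ≤ ρ0 * s := by
          have hkC : (k : ℝ) * c ≤ (k : ℝ) * (C * s) :=
            mul_le_mul_of_nonneg_left hCs (Nat.cast_nonneg k)
          have hρ0c : (k : ℝ) * C / c ≤ ρ0 := le_max_right _ _
          rw [div_le_iff₀ hc_pos] at hρ0c
          nlinarith
        calc (k : ℝ) ≤ ρ0 * s := hks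
          _ = ∑ i ∈ Finset.univ \ S, ρ0 * |x i| := by rw [hsDef, Finset.mul_sum]
          _ = ∑ i ∈ Finset.univ \ S, min 1 (ρ0 * |x i|) := by
              refine Finset.sum_congr rfl fun i hi => ?_
              rw [Finset.mem_sdiff, hSDef, Finset.mem_filter] at hi
              have : ¬ (1 ≤ ρ0 * |x i|) := fun hc' => hi.2 ⟨Finset.mem_univ i, hc'⟩
              exact (min_eq_right (le_of_lt (not_le.1 this))).symm
          _ ≤ ∑ i, min 1 (ρ0 * |x i|) := by
              refine Finset.sum_le_sum_of_subset_of_nonneg (Finset.subset_univ _)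
                (fun i _ _ => ?_)
              exact le_min zero_le_one (mul_nonneg (by linarith) (abs_nonneg _))
  obtain ⟨ρ0, hρ0_1, hρ0⟩ := hbase
  refine ⟨ρ0, by linarith, fun ρ hρ => ?_⟩
  have hρpos : (0:ℝ) < ρ := by linarith
  -- the candidate optimal point p*
  set vs : Fin n → ℝ := fun i => if xs i = 0 then 1 else 0 with hvsDef
  have hpsM : MPECFeasible A b δ (xs, vs) := by
    refine ⟨hxsF, ?_, fun i => ?_⟩
    · refine Finset.sum_eq_zero fun i _ => ?_
      by_cases h : xs i = 0 <;> simp [hvsDef, h]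
    · by_cases h : xs i = 0 <;> simp [hvsDef, h]
  have hpsObj : mpecObj ((xs, vs) : (Fin n → ℝ) × (Fin n → ℝ)) ≤ (k : ℝ) := by
    have : mpecObj ((xs, vs) : (Fin n → ℝ) × (Fin n → ℝ)) = (sc xs : ℝ) := by
      rw [mpecObj, hscDef]
      simp only
      rw [Finset.card_filter, Nat.cast_sum]
      refine Finset.sum_congr rfl fun i _ => ?_
      by_cases h : xs i = 0 <;> simp [hvsDef, h]
    rw [this]
    exact_mod_cast hxsc
  have hpsPen : penObj ρ ((xs, vs) : (Fin n → ℝ) × (Fin n → ℝ)) =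
      mpecObj ((xs, vs) : (Fin n → ℝ) × (Fin n → ℝ)) := by
    rw [penObj, mpecObj, hpsM.2.1, mul_zero, add_zero]
  -- lower bound on penalty objective
  have hterm : ∀ q : (Fin n → ℝ) × (Fin n → ℝ), (∀ i, 0 ≤ q.2 i ∧ q.2 i ≤ 1) →
      ∀ i, min 1 (ρ * |q.1 i|) ≤ (1 - q.2 i) + ρ * (q.2 i * |q.1 i|) := by
    intro q hq i
    obtain ⟨h0, h1⟩ := hq i
    have ht0 : 0 ≤ ρ * |q.1 i| := mul_nonneg (le_of_lt hρpos) (abs_nonneg _)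
    rcases le_total 1 (ρ * |q.1 i|) with h | h
    · rw [min_eq_left h]; nlinarith
    · rw [min_eq_right h]; nlinarith
  have hpen_expand : ∀ q : (Fin n → ℝ) × (Fin n → ℝ),
      penObj ρ q = ∑ i, ((1 - q.2 i) + ρ * (q.2 i * |q.1 i|)) := by
    intro q
    rw [penObj, Finset.mul_sum, ← Finset.sum_add_distrib]
  have hmono : ∀ t : ℝ, 0 ≤ t → min 1 (ρ0 * t) ≤ min 1 (ρ * t) := by
    intro t ht
    refine le_min (min_le_left _ _) ?_
    refine le_trans (min_le_right _ _) ?_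
    exact mul_le_mul_of_nonneg_right (by linarith) ht
  have hPenLB : ∀ q : (Fin n → ℝ) × (Fin n → ℝ), PenFeasible A b δ q →
      (k : ℝ) ≤ penObj ρ q := by
    intro q hq
    calc (k : ℝ) ≤ ∑ i, min 1 (ρ0 * |q.1 i|) := hρ0 q.1 hq.1
      _ ≤ ∑ i, min 1 (ρ * |q.1 i|) :=
          Finset.sum_le_sum fun i _ => hmono _ (abs_nonneg _)
      _ ≤ ∑ i, ((1 - q.2 i) + ρ * (q.2 i * |q.1 i|)) :=
          Finset.sum_le_sum fun i _ => hterm q hq.2 i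
      _ = penObj ρ q := (hpen_expand q).symm
  -- lower bound on MPEC objective
  have hMLB : ∀ q : (Fin n → ℝ) × (Fin n → ℝ), MPECFeasible A b δ q →
      (k : ℝ) ≤ mpecObj q := by
    intro q hq
    have hcomp : ∀ i, q.2 i * |q.1 i| = 0 := by
      have := (Finset.sum_eq_zero_iff_of_nonneg
        (fun i _ => mul_nonneg (hq.2.2 i).1 (abs_nonneg _))).1 hq.2.1
      exact fun i => this i (Finset.mem_univ i)
    calc (k : ℝ) ≤ (sc q.1 : ℝ) := by exact_mod_cast hk_le q.1 hq.1
      _ = ∑ i, (if q.1 i ≠ 0 then (1:ℝ) else 0) := by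
          rw [hscDef]
          simp only
          rw [Finset.card_filter, Nat.cast_sum]
          refine Finset.sum_congr rfl fun i _ => ?_
          by_cases h : q.1 i = 0 <;> simp [h]
      _ ≤ ∑ i, (1 - q.2 i) := by
          refine Finset.sum_le_sum fun i _ => ?_
          by_cases h : q.1 i = 0
          · simp [h]
            linarith [(hq.2.2 i).2]
          · have : q.2 i = 0 := by
              have h2 := hcomp i
              have : |q.1 i| > 0 := abs_pos.2 h
              rcases mul_eq_zero.1 h2 with h3 | h3
              · exact h3
              · exact absurd h3 (by linarith)
            simp [h, this]
      _ = mpecObj q := rfl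
  -- prove the set equality
  ext p
  simp only [Set.mem_setOf_eq]
  constructor
  · rintro ⟨hpM, hopt⟩
    have hpPen : PenFeasible A b δ p := ⟨hpM.1, hpM.2.2⟩
    refine ⟨hpPen, fun q hq => ?_⟩
    have h1 : penObj ρ p = mpecObj p := by
      rw [penObj, mpecObj, hpM.2.1, mul_zero, add_zero]
    have h2 : mpecObj p ≤ (k : ℝ) := le_trans (hopt _ hpsM) hpsObj
    calc penObj ρ p = mpecObj p := h1
      _ ≤ (k : ℝ) := h2
      _ ≤ penObj ρ q := hPenLB q hq
  · rintro ⟨hpP, hopt⟩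
    have hUB : penObj ρ p ≤ (k : ℝ) := by
      calc penObj ρ p ≤ penObj ρ ((xs, vs) : (Fin n → ℝ) × (Fin n → ℝ)) :=
            hopt _ ⟨hpsM.1, hpsM.2.2⟩
        _ = mpecObj ((xs, vs) : (Fin n → ℝ) × (Fin n → ℝ)) := hpsPen
        _ ≤ (k : ℝ) := hpsObj
    have hLB : (k : ℝ) ≤ penObj ρ p := hPenLB p hpP
    have heqk : penObj ρ p = (k : ℝ) := le_antisymm hUB hLB
    have hsum_a : ∑ i, ((1 - p.2 i) + ρ * (p.2 i * |p.1 i|)) = (k : ℝ) := by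
      rw [← hpen_expand p]; exact heqk
    have hsum_cb : ∑ i, min 1 (ρ * |p.1 i|) ≤ ∑ i, min 1 (ρ0 * |p.1 i|) := by
      have h1 : ∑ i, min 1 (ρ * |p.1 i|) ≤ ∑ i, ((1 - p.2 i) + ρ * (p.2 i * |p.1 i|)) :=
        Finset.sum_le_sum fun i _ => hterm p hpP.2 i
      have h2 : (k : ℝ) ≤ ∑ i, min 1 (ρ0 * |p.1 i|) := hρ0 p.1 hpP.1
      linarith
    have heq_cb : ∀ i ∈ Finset.univ, min 1 (ρ0 * |p.1 i|) = min 1 (ρ * |p.1 i|) :=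
      sum_eq_of_le' (fun i _ => hmono _ (abs_nonneg _)) hsum_cb
    have hsum_ba : ∑ i, ((1 - p.2 i) + ρ * (p.2 i * |p.1 i|)) ≤ ∑ i, min 1 (ρ * |p.1 i|) := by
      have h2 : (k : ℝ) ≤ ∑ i, min 1 (ρ0 * |p.1 i|) := hρ0 p.1 hpP.1
      have h3 : ∑ i, min 1 (ρ0 * |p.1 i|) ≤ ∑ i, min 1 (ρ * |p.1 i|) :=
        Finset.sum_le_sum fun i _ => hmono _ (abs_nonneg _)
      linarith
    have heq_ba : ∀ i ∈ Finset.univ,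
        min 1 (ρ * |p.1 i|) = (1 - p.2 i) + ρ * (p.2 i * |p.1 i|) :=
      sum_eq_of_le' (fun i _ => hterm p hpP.2 i) hsum_ba
    have hv0 : ∀ i, p.1 i ≠ 0 → p.2 i = 0 := by
      intro i hi
      have habs : 0 < |p.1 i| := abs_pos.2 hi
      have h1le : 1 ≤ ρ0 * |p.1 i| := by
        by_contra h
        push_neg at h
        have hc2 : min 1 (ρ0 * |p.1 i|) = ρ0 * |p.1 i| := min_eq_right (le_of_lt h)
        have hlt : min 1 (ρ0 * |p.1 i|) < min 1 (ρ * |p.1 i|) := by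
          rw [hc2]
          exact lt_min h (mul_lt_mul_of_pos_right hρ habs)
        have := heq_cb i (Finset.mem_univ i)
        linarith
      have hρx : 1 < ρ * |p.1 i| :=
        lt_of_le_of_lt h1le (mul_lt_mul_of_pos_right hρ habs)
      have hb1 : min 1 (ρ * |p.1 i|) = 1 := min_eq_left (le_of_lt hρx)
      have ha1 : (1 - p.2 i) + ρ * (p.2 i * |p.1 i|) = 1 := by
        rw [← heq_ba i (Finset.mem_univ i), hb1]
      obtain ⟨hv0', hv1'⟩ := hpP.2 i
      by_contra hvne
      have hvpos : 0 < p.2 i := lt_of_le_of_ne hv0' (Ne.symm hvne)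
      nlinarith
    have hcomp : ∑ i, p.2 i * |p.1 i| = 0 := by
      refine Finset.sum_eq_zero fun i _ => ?_
      by_cases h : p.1 i = 0
      · simp [h]
      · simp [hv0 i h]
    have hpM : MPECFeasible A b δ p := ⟨hpP.1, hcomp, hpP.2⟩
    refine ⟨hpM, fun q hq => ?_⟩
    have hmp : mpecObj p = (k : ℝ) := by
      have h' := heqk
      rw [penObj, hcomp, mul_zero, add_zero] at h'
      exact h'
    rw [hmp]
    exact hMLB q hq
end
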